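/- Let M be a von Neumann algebra on a complex Hilbert space H, let ρ ∈ End(M), let u ∈ M be a unitary, let σ = Ad(u)∘ρ, and for n ≥ 1 let u_n = u · ρ(u) ⋯ ρ^{n-1}(u) (with u_0 = 1). Let C_ρ denote the C*-subalgebra of M generated by ⋃_{n≥0} (ρ^n(M)' ∩ M) and C_σ the C*-subalgebra of M generated by ⋃_{n≥0} (σ^n(M)' ∩ M). Then there exists a unique *-isomorphism Θ from C_ρ onto C_σ such that Θ(x) = u_n x u_n* for every n ≥ 0 and every x ∈ ρ^n(M)' ∩ M. -/

import Mathlib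

noncomputable section

variable {H : Type*} [NormedAddCommGroup H] [InnerProductSpace ℂ H] [CompleteSpace H]

/-- A unital injective *-endomorphism of a (concrete) von Neumann algebra `M ⊆ B(H)`,
encoded as a map of the ambient algebra `B(H)` which is a unital injective *-homomorphism
on `M`; this is an element of `End(M)`. -/
structure VNEnd (M : VonNeumannAlgebra H) where
  toFun : (H →L[ℂ] H) → (H →L[ℂ] H)
  mem_map : ∀ x ∈ M, toFun x ∈ M
  map_add : ∀ x ∈ M, ∀ y ∈ M, toFun (x + y) = toFun x + toFun y
  map_smul : ∀ (c : ℂ), ∀ x ∈ M, toFun (c • x) = c • toFun x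
  map_mul : ∀ x ∈ M, ∀ y ∈ M, toFun (x * y) = toFun x * toFun y
  map_star : ∀ x ∈ M, toFun (star x) = star (toFun x)
  map_one : toFun 1 = 1
  inj : ∀ x ∈ M, ∀ y ∈ M, toFun x = toFun y → x = y

/-- `u` is a unitary element of `M`. -/
def IsUnitaryIn (M : VonNeumannAlgebra H) (u : H →L[ℂ] H) : Prop :=
  u ∈ M ∧ u * star u = 1 ∧ star u * u = 1

/-- The relative commutant `f^n(M)' ∩ M` of the image of `M` under the `n`-th iterate of `f`. -/
def relComm (M : VonNeumannAlgebra H) (f : (H →L[ℂ] H) → (H →L[ℂ] H)) (n : ℕ) :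
    Set (H →L[ℂ] H) :=
  Set.centralizer (f^[n] '' (M : Set (H →L[ℂ] H))) ∩ (M : Set (H →L[ℂ] H))

/-- The C*-subalgebra of `B(H)` generated by a set `S`: the norm closure of the
*-subalgebra generated by `S`. -/
def cstarGen (S : Set (H →L[ℂ] H)) : Set (H →L[ℂ] H) :=
  ((StarAlgebra.adjoin ℂ S).topologicalClosure : StarSubalgebra ℂ (H →L[ℂ] H))

/-- `Θ` is a *-isomorphism from the subalgebra (given as a subset) `A` onto `B`,
intertwining nothing; just an algebraic *-isomorphism of the pair of subsets. -/
def IsStarIsoOn (Θ : (H →L[ℂ] H) → (H →L[ℂ] H)) (A B : Set (H →L[ℂ] H)) : Prop :=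
  Set.BijOn Θ A B ∧
  (∀ x ∈ A, ∀ y ∈ A, Θ (x + y) = Θ x + Θ y) ∧
  (∀ (c : ℂ), ∀ x ∈ A, Θ (c • x) = c • Θ x) ∧
  (∀ x ∈ A, ∀ y ∈ A, Θ (x * y) = Θ x * Θ y) ∧
  (∀ x ∈ A, Θ (star x) = star (Θ x))

section MulHelpers
variable {R : Type*} [Monoid R]

lemma mic {a b : R} (h : a * b = 1) (x : R) : a * (b * x) = x := by
  rw [← mul_assoc, h, one_mul]

end MulHelpers

lemma conj_comm_iff {v a z : H →L[ℂ] H} (hv1 : v * star v = 1) (hv2 : star v * v = 1) :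
    (v * a * star v) * z = z * (v * a * star v) ↔
      a * (star v * z * v) = (star v * z * v) * a := by
  constructor
  · intro h
    have h' := congrArg (fun t => star v * t * v) h
    simp only [mul_assoc, mic hv1, mic hv2, hv1, hv2, mul_one, one_mul] at h' ⊢
    exact h'
  · intro h
    have h' := congrArg (fun t => v * t * star v) h
    simp only [mul_assoc, mic hv1, mic hv2, hv1, hv2, mul_one, one_mul] at h' ⊢
    exact h'

lemma mem_relComm' {M : VonNeumannAlgebra H} {f : (H →L[ℂ] H) → (H →L[ℂ] H)} {n : ℕ}
    {z : H →L[ℂ] H} :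
    z ∈ relComm M f n ↔ (∀ x ∈ M, f^[n] x * z = z * f^[n] x) ∧ z ∈ M := by
  constructor
  · rintro ⟨hc, hm⟩
    exact ⟨fun x hx => hc _ ⟨x, hx, rfl⟩, hm⟩
  · rintro ⟨hc, hm⟩
    refine ⟨?_, hm⟩
    rintro _ ⟨x, hx, rfl⟩
    exact hc x hx

namespace VNEnd

variable {M : VonNeumannAlgebra H} (ρ : VNEnd M)

lemma smul_mem' (c : ℂ) {x : H →L[ℂ] H} (hx : x ∈ M) : c • x ∈ M :=
  show c • x ∈ M.toStarSubalgebra from SMulMemClass.smul_mem c hx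

lemma iter_mem (n : ℕ) {x : H →L[ℂ] H} (hx : x ∈ M) : ρ.toFun^[n] x ∈ M := by
  induction n with
  | zero => simpa
  | succ n ih => rw [Function.iterate_succ_apply']; exact ρ.mem_map _ ih

lemma iter_mul (n : ℕ) {x y : H →L[ℂ] H} (hx : x ∈ M) (hy : y ∈ M) :
    ρ.toFun^[n] (x * y) = ρ.toFun^[n] x * ρ.toFun^[n] y := by
  induction n with
  | zero => simp
  | succ n ih =>
    rw [Function.iterate_succ_apply', Function.iterate_succ_apply',
      Function.iterate_succ_apply', ih, ρ.map_mul _ (ρ.iter_mem n hx) _ (ρ.iter_mem n hy)]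

lemma iter_star (n : ℕ) {x : H →L[ℂ] H} (hx : x ∈ M) :
    ρ.toFun^[n] (star x) = star (ρ.toFun^[n] x) := by
  induction n with
  | zero => simp
  | succ n ih =>
    rw [Function.iterate_succ_apply', Function.iterate_succ_apply', ih,
      ρ.map_star _ (ρ.iter_mem n hx)]

lemma iter_one (n : ℕ) : ρ.toFun^[n] 1 = 1 := by
  induction n with
  | zero => simp
  | succ n ih => rw [Function.iterate_succ_apply', ih, ρ.map_one]

lemma mem_relComm {n : ℕ} {z : H →L[ℂ] H} :
    z ∈ relComm M ρ.toFun n ↔ (∀ x ∈ M, ρ.toFun^[n] x * z = z * ρ.toFun^[n] x) ∧ z ∈ M := by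
  constructor
  · rintro ⟨hc, hm⟩
    exact ⟨fun x hx => hc _ ⟨x, hx, rfl⟩, hm⟩
  · rintro ⟨hc, hm⟩
    refine ⟨?_, hm⟩
    rintro _ ⟨x, hx, rfl⟩
    exact hc x hx

lemma relComm_one (n : ℕ) : (1 : H →L[ℂ] H) ∈ relComm M ρ.toFun n :=
  (ρ.mem_relComm).2 ⟨fun x _ => by simp, one_mem M⟩

lemma relComm_add (n : ℕ) {x y : H →L[ℂ] H} (hx : x ∈ relComm M ρ.toFun n)
    (hy : y ∈ relComm M ρ.toFun n) : x + y ∈ relComm M ρ.toFun n := by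
  rw [mem_relComm] at *
  exact ⟨fun m hm => by rw [mul_add, add_mul, hx.1 m hm, hy.1 m hm], add_mem hx.2 hy.2⟩

lemma relComm_smul (n : ℕ) (c : ℂ) {x : H →L[ℂ] H} (hx : x ∈ relComm M ρ.toFun n) :
    c • x ∈ relComm M ρ.toFun n := by
  rw [mem_relComm] at *
  exact ⟨fun m hm => by rw [mul_smul_comm, smul_mul_assoc, hx.1 m hm], smul_mem' c hx.2⟩

lemma relComm_mul (n : ℕ) {x y : H →L[ℂ] H} (hx : x ∈ relComm M ρ.toFun n)
    (hy : y ∈ relComm M ρ.toFun n) : x * y ∈ relComm M ρ.toFun n := by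
  rw [mem_relComm] at *
  refine ⟨fun m hm => ?_, mul_mem hx.2 hy.2⟩
  rw [← mul_assoc, hx.1 m hm, mul_assoc, hy.1 m hm, mul_assoc]

lemma relComm_star (n : ℕ) {x : H →L[ℂ] H} (hx : x ∈ relComm M ρ.toFun n) :
    star x ∈ relComm M ρ.toFun n := by
  rw [mem_relComm] at *
  refine ⟨fun m hm => ?_, star_mem hx.2⟩
  have := hx.1 (star m) (star_mem hm)
  rw [ρ.iter_star n hm] at this
  have h2 := congrArg star this
  simpa [star_mul] using h2.symm

lemma relComm_mono (n : ℕ) : relComm M ρ.toFun n ⊆ relComm M ρ.toFun (n + 1) := by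
  intro z hz
  rw [mem_relComm] at *
  refine ⟨fun x hx => ?_, hz.2⟩
  rw [Function.iterate_succ_apply]
  exact hz.1 _ (ρ.mem_map _ hx)

lemma relComm_le {m n : ℕ} (h : m ≤ n) : relComm M ρ.toFun m ⊆ relComm M ρ.toFun n := by
  induction n with
  | zero => simp [Nat.le_zero.1 h]
  | succ n ih =>
    rcases Nat.lt_or_ge m (n+1) with h' | h'
    · exact fun z hz => ρ.relComm_mono n (ih (Nat.lt_succ_iff.1 h') hz)
    · have : m = n + 1 := le_antisymm h h'
      simp [this]


section Cocycle

variable (u : H →L[ℂ] H) (hu : IsUnitaryIn M u)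
variable (U : ℕ → (H →L[ℂ] H))
variable (hU : ∀ n, U n = (((List.range n).map fun i => ρ.toFun^[i] u).prod))

include hU

lemma U_zero : U 0 = 1 := by simp [hU 0]

lemma U_succ (n : ℕ) : U (n + 1) = U n * ρ.toFun^[n] u := by
  rw [hU, hU, List.range_succ, List.map_append, List.prod_append]
  simp

include hu

lemma U_mem (n : ℕ) : U n ∈ M := by
  induction n with
  | zero => rw [U_zero ρ u U hU]; exact one_mem M
  | succ n ih => rw [U_succ ρ u U hU]; exact mul_mem ih (ρ.iter_mem n hu.1)

lemma U_unit (n : ℕ) : U n * star (U n) = 1 ∧ star (U n) * U n = 1 := by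
  induction n with
  | zero => rw [U_zero ρ u U hU]; simp
  | succ n ih =>
    have hw1 : ρ.toFun^[n] u * star (ρ.toFun^[n] u) = 1 := by
      rw [← ρ.iter_star n hu.1, ← ρ.iter_mul n hu.1 (star_mem hu.1), hu.2.1, ρ.iter_one]
    have hw2 : star (ρ.toFun^[n] u) * ρ.toFun^[n] u = 1 := by
      rw [← ρ.iter_star n hu.1, ← ρ.iter_mul n (star_mem hu.1) hu.1, hu.2.2, ρ.iter_one]
    rw [U_succ ρ u U hU]
    constructor
    · simp only [star_mul, mul_assoc, mic hw1, ih.1]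
    · simp only [star_mul, mul_assoc, mic ih.2, hw2]

lemma U_succ' (n : ℕ) : U (n + 1) = u * ρ.toFun (U n) := by
  induction n with
  | zero =>
    rw [U_succ ρ u U hU, U_zero ρ u U hU, ρ.map_one, one_mul, Function.iterate_zero_apply, mul_one]
  | succ n ih =>
    rw [U_succ ρ u U hU (n+1), ih, Function.iterate_succ_apply', mul_assoc,
      ← ρ.map_mul _ (U_mem ρ u hu U hU n) _ (ρ.iter_mem n hu.1), ← U_succ ρ u U hU, ih]

lemma sigma_iter (σ : (H →L[ℂ] H) → (H →L[ℂ] H)) (hσ : σ = fun x => u * ρ.toFun x * star u)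
    (n : ℕ) {x : H →L[ℂ] H} (hx : x ∈ M) :
    σ^[n] x = U n * ρ.toFun^[n] x * star (U n) := by
  induction n with
  | zero => rw [U_zero ρ u U hU]; simp
  | succ n ih =>
    rw [Function.iterate_succ_apply', ih, hσ]
    simp only
    rw [mul_assoc (U n), ρ.map_mul _ (U_mem ρ u hu U hU n) _
        (mul_mem (ρ.iter_mem n hx) (star_mem (U_mem ρ u hu U hU n))),
      ρ.map_mul _ (ρ.iter_mem n hx) _ (star_mem (U_mem ρ u hu U hU n)),
      ρ.map_star _ (U_mem ρ u hu U hU n), ← Function.iterate_succ_apply' ρ.toFun n x,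
      U_succ' ρ u hu U hU n, star_mul]
    simp only [mul_assoc]

end Cocycle


/-- `Ad(u) ∘ ρ` as an element of `End(M)`. -/
def conj (u : H →L[ℂ] H) (hu : IsUnitaryIn M u) : VNEnd M where
  toFun x := u * ρ.toFun x * star u
  mem_map x hx := mul_mem (mul_mem hu.1 (ρ.mem_map x hx)) (star_mem hu.1)
  map_add x hx y hy := by rw [ρ.map_add x hx y hy, mul_add, add_mul]
  map_smul c x hx := by rw [ρ.map_smul c x hx, mul_smul_comm, smul_mul_assoc]
  map_mul x hx y hy := by
    rw [ρ.map_mul x hx y hy]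
    simp only [mul_assoc, mic hu.2.2]
  map_star x hx := by rw [ρ.map_star x hx]; simp only [star_mul, star_star, mul_assoc]
  map_one := by rw [ρ.map_one, mul_one, hu.2.1]
  inj x hx y hy h := by
    apply ρ.inj x hx y hy
    have h2 := congrArg (fun t => star u * t * u) h
    simp only [mul_assoc, mic hu.2.2, hu.2.2, mul_one] at h2
    exact h2

section Image

variable (u : H →L[ℂ] H) (hu : IsUnitaryIn M u)
variable (U : ℕ → (H →L[ℂ] H))
variable (hU : ∀ n, U n = (((List.range n).map fun i => ρ.toFun^[i] u).prod))
variable (σ : (H →L[ℂ] H) → (H →L[ℂ] H)) (hσ : σ = fun x => u * ρ.toFun x * star u)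

include hu hU hσ

lemma relComm_sigma_eq (n : ℕ) :
    relComm M σ n = (fun z => U n * z * star (U n)) '' relComm M ρ.toFun n := by
  obtain ⟨hv1, hv2⟩ := U_unit ρ u hu U hU n
  have hvm := U_mem ρ u hu U hU n
  ext z
  constructor
  · intro hz
    rw [mem_relComm'] at hz
    refine ⟨star (U n) * z * U n, ?_, ?_⟩
    · rw [mem_relComm']
      refine ⟨fun m hm => ?_, mul_mem (mul_mem (star_mem hvm) hz.2) hvm⟩
      have h := hz.1 m hm
      rw [sigma_iter ρ u hu U hU σ hσ n hm] at h
      exact (conj_comm_iff hv1 hv2).mp h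
    · simp only [mul_assoc, mic hv1, hv1, mul_one]
  · rintro ⟨x, hx, rfl⟩
    rw [mem_relComm'] at hx ⊢
    refine ⟨fun m hm => ?_, mul_mem (mul_mem hvm hx.2) (star_mem hvm)⟩
    rw [sigma_iter ρ u hu U hU σ hσ n hm]
    rw [conj_comm_iff hv1 hv2]
    have : star (U n) * (U n * x * star (U n)) * U n = x := by
      simp only [mul_assoc, mic hv2, hv2, mul_one]
    rw [this]
    exact hx.1 m hm

end Image


/-- The union `⋃ n, ρ^n(M)' ∩ M` as a star subalgebra. -/
def unionSA (ρ : VNEnd M) : StarSubalgebra ℂ (H →L[ℂ] H) where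
  carrier := ⋃ n, relComm M ρ.toFun n
  mul_mem' := by
    rintro a b ha hb
    obtain ⟨_, ⟨m, rfl⟩, ha⟩ := ha
    obtain ⟨_, ⟨n, rfl⟩, hb⟩ := hb
    exact Set.mem_iUnion.2 ⟨max m n, ρ.relComm_mul _
      (ρ.relComm_le (le_max_left m n) ha) (ρ.relComm_le (le_max_right m n) hb)⟩
  add_mem' := by
    rintro a b ha hb
    obtain ⟨_, ⟨m, rfl⟩, ha⟩ := ha
    obtain ⟨_, ⟨n, rfl⟩, hb⟩ := hb
    exact Set.mem_iUnion.2 ⟨max m n, ρ.relComm_add _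
      (ρ.relComm_le (le_max_left m n) ha) (ρ.relComm_le (le_max_right m n) hb)⟩
  algebraMap_mem' := by
    intro c
    refine Set.mem_iUnion.2 ⟨0, ?_⟩
    have : (algebraMap ℂ (H →L[ℂ] H)) c = c • (1 : H →L[ℂ] H) := Algebra.algebraMap_eq_smul_one c
    rw [this]
    exact ρ.relComm_smul 0 c (ρ.relComm_one 0)
  star_mem' := by
    rintro a ha
    obtain ⟨_, ⟨m, rfl⟩, ha⟩ := ha
    exact Set.mem_iUnion.2 ⟨m, ρ.relComm_star m ha⟩

lemma coe_unionSA (ρ : VNEnd M) :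
    ((unionSA ρ : StarSubalgebra ℂ (H →L[ℂ] H)) : Set (H →L[ℂ] H))
      = ⋃ n, relComm M ρ.toFun n := rfl

lemma adjoin_unionSA (ρ : VNEnd M) :
    StarAlgebra.adjoin ℂ (⋃ n, relComm M ρ.toFun n) = unionSA ρ := by
  refine le_antisymm (StarAlgebra.adjoin_le ?_) (StarAlgebra.subset_adjoin ℂ _)
  exact le_of_eq (coe_unionSA ρ).symm

lemma cstarGen_eq (ρ : VNEnd M) :
    cstarGen (⋃ n, relComm M ρ.toFun n) = closure (⋃ n, relComm M ρ.toFun n) := by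
  rw [cstarGen, adjoin_unionSA, StarSubalgebra.topologicalClosure_coe, coe_unionSA]


lemma norm_conj_le {v : H →L[ℂ] H} (hv : star v * v = 1) (z : H →L[ℂ] H) :
    ‖v * z * star v‖ ≤ ‖z‖ := by
  have h1 : ‖v‖ * ‖v‖ ≤ 1 := by
    rw [← CStarRing.norm_star_mul_self, hv, ContinuousLinearMap.one_def]
    exact ContinuousLinearMap.norm_id_le
  have h2 : ‖v * z * star v‖ ≤ ‖v‖ * ‖z‖ * ‖v‖ := by
    calc ‖v * z * star v‖ ≤ ‖v * z‖ * ‖star v‖ := norm_mul_le _ _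
      _ ≤ ‖v‖ * ‖z‖ * ‖star v‖ :=
          mul_le_mul_of_nonneg_right (norm_mul_le _ _) (norm_nonneg _)
      _ = ‖v‖ * ‖z‖ * ‖v‖ := by rw [norm_star]
  have hz := norm_nonneg z
  have hv0 := norm_nonneg v
  nlinarith

section EventuallyConst

variable (u : H →L[ℂ] H) (hu : IsUnitaryIn M u)
variable (U : ℕ → (H →L[ℂ] H))
variable (hU : ∀ n, U n = (((List.range n).map fun i => ρ.toFun^[i] u).prod))

include hu

lemma iter_unit (n : ℕ) :
    ρ.toFun^[n] u * star (ρ.toFun^[n] u) = 1 ∧ star (ρ.toFun^[n] u) * ρ.toFun^[n] u = 1 := by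
  constructor
  · rw [← ρ.iter_star n hu.1, ← ρ.iter_mul n hu.1 (star_mem hu.1), hu.2.1, ρ.iter_one]
  · rw [← ρ.iter_star n hu.1, ← ρ.iter_mul n (star_mem hu.1) hu.1, hu.2.2, ρ.iter_one]

include hU

lemma theta_const {n : ℕ} {x : H →L[ℂ] H} (hx : x ∈ relComm M ρ.toFun n) :
    ∀ m, n ≤ m → U m * x * star (U m) = U n * x * star (U n) := by
  intro m hm
  induction m, hm using Nat.le_induction with
  | base => rfl
  | succ m hm ih =>
    set w := ρ.toFun^[m] u with hw
    obtain ⟨hw1, hw2⟩ := iter_unit ρ u hu m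
    have hcom : w * x = x * w :=
      (mem_relComm'.1 (ρ.relComm_le hm hx)).1 u hu.1
    rw [← ih, U_succ ρ u U hU, star_mul]
    simp only [mul_assoc]
    rw [← mul_assoc w x, hcom, mul_assoc, mic hw1]

lemma xi_const (σ : (H →L[ℂ] H) → (H →L[ℂ] H)) (hσ : σ = fun x => u * ρ.toFun x * star u)
    {n : ℕ} {y : H →L[ℂ] H} (hy : y ∈ relComm M σ n) :
    ∀ m, n ≤ m → star (U m) * y * U m = star (U n) * y * U n := by
  have hσc : σ = (ρ.conj u hu).toFun := by funext z; rw [hσ]; rfl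
  intro m hm
  induction m, hm using Nat.le_induction with
  | base => rfl
  | succ m hm ih =>
    have hym : y ∈ relComm M σ m := by
      rw [hσc] at hy ⊢
      exact (ρ.conj u hu).relComm_le hm hy
    rw [relComm_sigma_eq ρ u hu U hU σ hσ m] at hym
    obtain ⟨x, hxA, rfl⟩ := hym
    set w := ρ.toFun^[m] u with hw
    obtain ⟨hw1, hw2⟩ := iter_unit ρ u hu m
    obtain ⟨hv1, hv2⟩ := U_unit ρ u hu U hU m
    have hcom : w * x = x * w := (mem_relComm'.1 hxA).1 u hu.1
    rw [← ih, U_succ ρ u U hU, star_mul]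
    simp only [mul_assoc, mic hv2, hv2, mul_one]
    rw [← hcom, mic hw2]

end EventuallyConst


section Master

variable (u : H →L[ℂ] H) (hu : IsUnitaryIn M u)
variable (U : ℕ → (H →L[ℂ] H))
variable (hU : ∀ n, U n = (((List.range n).map fun i => ρ.toFun^[i] u).prod))
variable (σ : (H →L[ℂ] H) → (H →L[ℂ] H)) (hσ : σ = fun x => u * ρ.toFun x * star u)

include hu hU hσ

open Filter Topology in
lemma master :
    ∃ Θ : (H →L[ℂ] H) → (H →L[ℂ] H),
      (∀ n, ∀ x ∈ relComm M ρ.toFun n, Θ x = U n * x * star (U n)) ∧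
      Set.MapsTo Θ (closure (⋃ n, relComm M ρ.toFun n)) (closure (⋃ n, relComm M σ n)) ∧
      (∀ x ∈ closure (⋃ n, relComm M ρ.toFun n), ∀ y ∈ closure (⋃ n, relComm M ρ.toFun n),
        Θ (x + y) = Θ x + Θ y) ∧
      (∀ (c : ℂ), ∀ x ∈ closure (⋃ n, relComm M ρ.toFun n), Θ (c • x) = c • Θ x) ∧
      (∀ x ∈ closure (⋃ n, relComm M ρ.toFun n), ∀ y ∈ closure (⋃ n, relComm M ρ.toFun n),
        Θ (x * y) = Θ x * Θ y) ∧
      (∀ x ∈ closure (⋃ n, relComm M ρ.toFun n), Θ (star x) = star (Θ x)) ∧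
      (∀ x ∈ closure (⋃ n, relComm M ρ.toFun n), ∀ y ∈ closure (⋃ n, relComm M ρ.toFun n),
        ‖Θ x - Θ y‖ ≤ ‖x - y‖) := by
  classical
  set A : Set (H →L[ℂ] H) := ⋃ n, relComm M ρ.toFun n with hA
  set s : (H →L[ℂ] H) → ℕ → (H →L[ℂ] H) := fun x n => U n * x * star (U n) with hs
  have hunit := fun n => U_unit ρ u hu U hU n
  have hlip : ∀ n x y, ‖s x n - s y n‖ ≤ ‖x - y‖ := by
    intro n x y
    have he : s x n - s y n = U n * (x - y) * star (U n) := by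
      simp only [hs]; noncomm_ring
    rw [he]
    exact norm_conj_le (hunit n).2 _
  -- Cauchy property on the closure
  have hcauchy : ∀ x ∈ closure A, CauchySeq (s x) := by
    intro x hx
    rw [Metric.cauchySeq_iff']
    intro ε hε
    obtain ⟨x', hx'A, hd⟩ : ∃ y ∈ A, dist x y < ε / 3 :=
      Metric.mem_closure_iff.1 hx (ε/3) (by linarith)
    obtain ⟨_, ⟨N, rfl⟩, hx'N⟩ := hx'A
    refine ⟨N, fun m hm => ?_⟩
    have e1 : s x' m = s x' N := theta_const ρ u hu U hU hx'N m hm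
    have d1 : dist (s x m) (s x' m) < ε / 3 := by
      rw [dist_eq_norm]
      exact lt_of_le_of_lt (hlip m x x') (by rwa [← dist_eq_norm])
    have d2 : dist (s x' N) (s x N) < ε / 3 := by
      rw [dist_eq_norm]
      exact lt_of_le_of_lt (hlip N x' x) (by rwa [← dist_eq_norm, dist_comm])
    calc dist (s x m) (s x N) ≤ dist (s x m) (s x' m) + dist (s x' m) (s x N) :=
          dist_triangle _ _ _
      _ = dist (s x m) (s x' m) + dist (s x' N) (s x N) := by rw [e1]
      _ < ε / 3 + ε / 3 := by exact add_lt_add d1 d2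
      _ ≤ ε := by linarith
  set Θ : (H →L[ℂ] H) → (H →L[ℂ] H) := fun x => limUnder atTop (s x) with hΘdef
  have hΘ : ∀ x ∈ closure A, Tendsto (s x) atTop (𝓝 (Θ x)) := by
    intro x hx
    obtain ⟨L, hL⟩ := cauchySeq_tendsto_of_complete (hcauchy x hx)
    have : Θ x = L := hL.limUnder_eq
    rwa [this]
  have hspec : ∀ n, ∀ x ∈ relComm M ρ.toFun n, Θ x = U n * x * star (U n) := by
    intro n x hxn
    exact (tendsto_atTop_of_eventually_const (theta_const ρ u hu U hU hxn)).limUnder_eq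
  have hSc : ((unionSA ρ).topologicalClosure : Set (H →L[ℂ] H)) = closure A := by
    rw [StarSubalgebra.topologicalClosure_coe, coe_unionSA]
  have hadd_mem : ∀ x ∈ closure A, ∀ y ∈ closure A, x + y ∈ closure A := by
    intro x hx y hy; rw [← hSc] at hx hy ⊢; exact add_mem hx hy
  have hsmul_mem : ∀ (c : ℂ), ∀ x ∈ closure A, c • x ∈ closure A := by
    intro c x hx; rw [← hSc] at hx ⊢
    exact SMulMemClass.smul_mem c hx
  have hmul_mem : ∀ x ∈ closure A, ∀ y ∈ closure A, x * y ∈ closure A := by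
    intro x hx y hy; rw [← hSc] at hx hy ⊢; exact mul_mem hx hy
  have hstar_mem : ∀ x ∈ closure A, star x ∈ closure A := by
    intro x hx; rw [← hSc] at hx ⊢; exact star_mem hx
  have hlipΘ : ∀ x ∈ closure A, ∀ y ∈ closure A, ‖Θ x - Θ y‖ ≤ ‖x - y‖ := by
    intro x hx y hy
    have ht : Tendsto (fun n => s x n - s y n) atTop (𝓝 (Θ x - Θ y)) :=
      (hΘ x hx).sub (hΘ y hy)
    exact le_of_tendsto ht.norm (Filter.Eventually.of_forall fun n => hlip n x y)
  have hadd : ∀ x ∈ closure A, ∀ y ∈ closure A, Θ (x + y) = Θ x + Θ y := by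
    intro x hx y hy
    refine tendsto_nhds_unique (hΘ _ (hadd_mem x hx y hy)) ?_
    have he : s (x + y) = fun n => s x n + s y n := by
      funext n; simp only [hs]; noncomm_ring
    rw [he]; exact (hΘ x hx).add (hΘ y hy)
  have hsmul : ∀ (c : ℂ), ∀ x ∈ closure A, Θ (c • x) = c • Θ x := by
    intro c x hx
    refine tendsto_nhds_unique (hΘ _ (hsmul_mem c x hx)) ?_
    have he : s (c • x) = fun n => c • s x n := by
      funext n; simp only [hs, mul_smul_comm, smul_mul_assoc]
    rw [he]; exact (hΘ x hx).const_smul c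
  have hmul : ∀ x ∈ closure A, ∀ y ∈ closure A, Θ (x * y) = Θ x * Θ y := by
    intro x hx y hy
    refine tendsto_nhds_unique (hΘ _ (hmul_mem x hx y hy)) ?_
    have he : s (x * y) = fun n => s x n * s y n := by
      funext n; simp only [hs, mul_assoc, mic (hunit n).2]
    rw [he]; exact (hΘ x hx).mul (hΘ y hy)
  have hstar : ∀ x ∈ closure A, Θ (star x) = star (Θ x) := by
    intro x hx
    refine tendsto_nhds_unique (hΘ _ (hstar_mem x hx)) ?_
    have he : s (star x) = fun n => star (s x n) := by
      funext n; simp only [hs, star_mul, star_star, mul_assoc]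
    rw [he]; exact (hΘ x hx).star
  have hmaps : Set.MapsTo Θ (closure A) (closure (⋃ n, relComm M σ n)) := by
    intro x hx
    rw [Metric.mem_closure_iff]
    intro ε hε
    obtain ⟨x', hx'A, hd⟩ := Metric.mem_closure_iff.1 hx (ε/2) (by linarith)
    obtain ⟨_, ⟨N, rfl⟩, hx'N⟩ := hx'A
    refine ⟨U N * x' * star (U N), ?_, ?_⟩
    · refine Set.mem_iUnion.2 ⟨N, ?_⟩
      rw [relComm_sigma_eq ρ u hu U hU σ hσ N]
      exact ⟨x', hx'N, rfl⟩
    · have hx'c : x' ∈ closure A := subset_closure (Set.mem_iUnion.2 ⟨N, hx'N⟩)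
      rw [← hspec N x' hx'N, dist_eq_norm]
      calc ‖Θ x - Θ x'‖ ≤ ‖x - x'‖ := hlipΘ x hx x' hx'c
        _ < ε := by
            rw [← dist_eq_norm]
            exact lt_of_lt_of_le hd (by linarith)
  exact ⟨Θ, hspec, hmaps, hadd, hsmul, hmul, hstar, hlipΘ⟩

end Master


section Symmetry

variable (u : H →L[ℂ] H) (hu : IsUnitaryIn M u)
variable (U : ℕ → (H →L[ℂ] H))
variable (hU : ∀ n, U n = (((List.range n).map fun i => ρ.toFun^[i] u).prod))

include hu hU

lemma U_star (n : ℕ) :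
    star (U n) = (((List.range n).map fun i => (ρ.conj u hu).toFun^[i] (star u)).prod) := by
  induction n with
  | zero => simp [U_zero ρ u U hU]
  | succ n ih =>
    rw [List.range_succ, List.map_append, List.prod_append, List.map_singleton,
      List.prod_singleton, ← ih]
    have hσi := sigma_iter ρ u hu U hU (ρ.conj u hu).toFun rfl n (star_mem hu.1)
    obtain ⟨hv1, hv2⟩ := U_unit ρ u hu U hU n
    rw [U_succ ρ u U hU, star_mul, hσi, ρ.iter_star n hu.1]
    simp only [mul_assoc, mic hv2]

end Symmetry


lemma lip_of_iso {Θ : (H →L[ℂ] H) → (H →L[ℂ] H)} {B' : Set (H →L[ℂ] H)}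
    (hiso : IsStarIsoOn Θ (cstarGen (⋃ n, relComm M ρ.toFun n)) B') :
    ∀ x ∈ cstarGen (⋃ n, relComm M ρ.toFun n), ∀ y ∈ cstarGen (⋃ n, relComm M ρ.toFun n),
      ‖Θ x - Θ y‖ ≤ ‖x - y‖ := by
  obtain ⟨hbij, hadd, hsmul, hmul, hstar⟩ := hiso
  set Sc := (unionSA ρ).topologicalClosure with hScdef
  haveI hcl : IsClosed ((Sc : StarSubalgebra ℂ (H →L[ℂ] H)) : Set (H →L[ℂ] H)) :=
    StarSubalgebra.isClosed_topologicalClosure _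
  have hset : cstarGen (⋃ n, relComm M ρ.toFun n) = (Sc : Set (H →L[ℂ] H)) := by
    rw [cstarGen, adjoin_unionSA]
  have hmem : ∀ z : Sc, (z : H →L[ℂ] H) ∈ cstarGen (⋃ n, relComm M ρ.toFun n) := fun z => by
    rw [hset]; exact z.2
  have hzero : Θ 0 = 0 := by
    have h0 : (0 : H →L[ℂ] H) ∈ cstarGen (⋃ n, relComm M ρ.toFun n) := by
      rw [hset]; exact zero_mem Sc
    have h1 := hsmul 0 0 h0
    simpa using h1
  let φ : Sc →⋆ₙₐ[ℂ] (H →L[ℂ] H) :=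
    { toFun := fun z => Θ (z : H →L[ℂ] H)
      map_smul' := fun c z => hsmul c _ (hmem z)
      map_zero' := hzero
      map_add' := fun a b => hadd _ (hmem a) _ (hmem b)
      map_mul' := fun a b => hmul _ (hmem a) _ (hmem b)
      map_star' := fun z => hstar _ (hmem z) }
  intro x hx y hy
  rw [hset] at hx hy
  have hdiff : Θ x - Θ y = φ (⟨x, hx⟩ - ⟨y, hy⟩) := by
    rw [map_sub]; rfl
  rw [hdiff]
  calc ‖φ (⟨x, hx⟩ - ⟨y, hy⟩)‖ ≤ ‖(⟨x, hx⟩ - ⟨y, hy⟩ : Sc)‖ :=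
        NonUnitalStarAlgHom.norm_apply_le φ _
    _ = ‖x - y‖ := rfl

end VNEnd









/-- Let `ρ ∈ End(M)`, `u ∈ M` unitary, `σ = Ad(u)∘ρ`, and
`u_n = u · ρ(u) ⋯ ρ^{n-1}(u)` (`u_0 = 1`). There is a unique *-isomorphism `Θ` from the
C*-algebra `C_ρ` generated by `⋃ n, ρ^n(M)' ∩ M` onto the C*-algebra `C_σ` generated by
`⋃ n, σ^n(M)' ∩ M` such that `Θ = Ad(u_n)` on `ρ^n(M)' ∩ M` for every `n`. -/
theorem exists_unique_starIso_cstarGen (M : VonNeumannAlgebra H) (ρ : VNEnd M)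
    (u : H →L[ℂ] H) (hu : IsUnitaryIn M u)
    (σ : (H →L[ℂ] H) → (H →L[ℂ] H)) (hσ : σ = fun x => u * ρ.toFun x * star u)
    (U : ℕ → (H →L[ℂ] H)) (hU : ∀ n, U n = (((List.range n).map fun i => ρ.toFun^[i] u).prod)) :
    (∃ Θ : (H →L[ℂ] H) → (H →L[ℂ] H),
      IsStarIsoOn Θ (cstarGen (⋃ n, relComm M ρ.toFun n)) (cstarGen (⋃ n, relComm M σ n)) ∧
      ∀ n : ℕ, ∀ x ∈ relComm M ρ.toFun n, Θ x = U n * x * star (U n)) ∧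
    (∀ Θ₁ Θ₂ : (H →L[ℂ] H) → (H →L[ℂ] H),
      (IsStarIsoOn Θ₁ (cstarGen (⋃ n, relComm M ρ.toFun n)) (cstarGen (⋃ n, relComm M σ n)) ∧
        ∀ n : ℕ, ∀ x ∈ relComm M ρ.toFun n, Θ₁ x = U n * x * star (U n)) →
      (IsStarIsoOn Θ₂ (cstarGen (⋃ n, relComm M ρ.toFun n)) (cstarGen (⋃ n, relComm M σ n)) ∧
        ∀ n : ℕ, ∀ x ∈ relComm M ρ.toFun n, Θ₂ x = U n * x * star (U n)) →
      Set.EqOn Θ₁ Θ₂ (cstarGen (⋃ n, relComm M ρ.toFun n))) := by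
    classical
  have hσc : σ = (ρ.conj u hu).toFun := by funext z; rw [hσ]; rfl
  have hgA : cstarGen (⋃ n, relComm M ρ.toFun n) = closure (⋃ n, relComm M ρ.toFun n) :=
    VNEnd.cstarGen_eq ρ
  have hgB : cstarGen (⋃ n, relComm M σ n) = closure (⋃ n, relComm M σ n) := by
    rw [hσc]; exact VNEnd.cstarGen_eq (ρ.conj u hu)
  obtain ⟨Θ, hspec, hmaps, hadd, hsmul, hmul, hstar, hlip⟩ := VNEnd.master ρ u hu U hU σ hσ
  have hu' : IsUnitaryIn M (star u) :=
    ⟨star_mem hu.1, by rw [star_star]; exact hu.2.2, by rw [star_star]; exact hu.2.1⟩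
  have hU' : ∀ n, star (U n) =
      (((List.range n).map fun i => (ρ.conj u hu).toFun^[i] (star u)).prod) :=
    fun n => VNEnd.U_star ρ u hu U hU n
  have hσ' : ρ.toFun = fun x => star u * (ρ.conj u hu).toFun x * star (star u) := by
    funext z
    show ρ.toFun z = star u * (u * ρ.toFun z * star u) * star (star u)
    rw [star_star]
    simp only [mul_assoc, mic hu.2.2, hu.2.2, mul_one]
  obtain ⟨Ξ, hspecΞ, hmapsΞ, haddΞ, hsmulΞ, hmulΞ, hstarΞ, hlipΞ⟩ :=
    VNEnd.master (ρ.conj u hu) (star u) hu' (fun n => star (U n)) hU' ρ.toFun hσ'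
  rw [← hσc] at hspecΞ hmapsΞ haddΞ hsmulΞ hmulΞ hstarΞ hlipΞ
  have hbaseΞΘ : ∀ x ∈ (⋃ n, relComm M ρ.toFun n), Ξ (Θ x) = x := by
    rintro x ⟨_, ⟨n, rfl⟩, hxn⟩
    obtain ⟨hv1, hv2⟩ := VNEnd.U_unit ρ u hu U hU n
    have hmemB : U n * x * star (U n) ∈ relComm M σ n := by
      rw [VNEnd.relComm_sigma_eq ρ u hu U hU σ hσ n]; exact ⟨x, hxn, rfl⟩
    rw [hspec n x hxn, hspecΞ n _ hmemB, star_star]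
    simp only [mul_assoc, mic hv2, hv2, mul_one]
  have hΞΘ : ∀ x ∈ closure (⋃ n, relComm M ρ.toFun n), Ξ (Θ x) = x := by
    intro x hx
    have key : ∀ ε : ℝ, 0 < ε → ‖Ξ (Θ x) - x‖ ≤ 0 + ε := by
      intro ε hε
      obtain ⟨x', hx'A, hd⟩ := Metric.mem_closure_iff.1 hx (ε/2) (by linarith)
      have hx'c : x' ∈ closure (⋃ n, relComm M ρ.toFun n) := subset_closure hx'A
      have h1 : ‖Ξ (Θ x) - Ξ (Θ x')‖ ≤ ‖Θ x - Θ x'‖ := hlipΞ _ (hmaps hx) _ (hmaps hx'c)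
      have h2 : ‖Θ x - Θ x'‖ ≤ ‖x - x'‖ := hlip x hx x' hx'c
      rw [hbaseΞΘ x' hx'A] at h1
      have h3 : dist (Ξ (Θ x)) x ≤ dist (Ξ (Θ x)) x' + dist x' x := dist_triangle _ _ _
      rw [dist_eq_norm] at h3
      rw [dist_eq_norm, dist_eq_norm] at h3
      have h4 : ‖Ξ (Θ x) - x'‖ ≤ ‖x - x'‖ := le_trans h1 h2
      have h5 : ‖x - x'‖ < ε / 2 := by rw [← dist_eq_norm]; exact hd
      have h6 : ‖x' - x‖ < ε / 2 := by rw [← dist_eq_norm, dist_comm, dist_eq_norm]; exact h5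
      linarith
    have h0 : ‖Ξ (Θ x) - x‖ ≤ 0 := by
      have := le_of_forall_pos_le_add key
      simpa using this
    have := norm_le_zero_iff.1 h0
    exact sub_eq_zero.1 this
  have hbaseΘΞ : ∀ y ∈ (⋃ n, relComm M σ n), Θ (Ξ y) = y := by
    rintro y ⟨_, ⟨n, rfl⟩, hyn⟩
    have hyn' : y ∈ (fun z => U n * z * star (U n)) '' relComm M ρ.toFun n := by
      rw [← VNEnd.relComm_sigma_eq ρ u hu U hU σ hσ n]; exact hyn
    obtain ⟨x, hxn, rfl⟩ := hyn'
    obtain ⟨hv1, hv2⟩ := VNEnd.U_unit ρ u hu U hU n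
    rw [hspecΞ n _ hyn, star_star]
    have hXix : star (U n) * (U n * x * star (U n)) * U n = x := by
      simp only [mul_assoc, mic hv2, hv2, mul_one]
    rw [hXix, hspec n x hxn]
  have hΘΞ : ∀ y ∈ closure (⋃ n, relComm M σ n), Θ (Ξ y) = y := by
    intro y hy
    have key : ∀ ε : ℝ, 0 < ε → ‖Θ (Ξ y) - y‖ ≤ 0 + ε := by
      intro ε hε
      obtain ⟨y', hy'B, hd⟩ := Metric.mem_closure_iff.1 hy (ε/2) (by linarith)
      have hy'c : y' ∈ closure (⋃ n, relComm M σ n) := subset_closure hy'B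
      have h1 : ‖Θ (Ξ y) - Θ (Ξ y')‖ ≤ ‖Ξ y - Ξ y'‖ := hlip _ (hmapsΞ hy) _ (hmapsΞ hy'c)
      have h2 : ‖Ξ y - Ξ y'‖ ≤ ‖y - y'‖ := hlipΞ y hy y' hy'c
      rw [hbaseΘΞ y' hy'B] at h1
      have h3 : dist (Θ (Ξ y)) y ≤ dist (Θ (Ξ y)) y' + dist y' y := dist_triangle _ _ _
      rw [dist_eq_norm, dist_eq_norm, dist_eq_norm] at h3
      have h4 : ‖Θ (Ξ y) - y'‖ ≤ ‖y - y'‖ := le_trans h1 h2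
      have h5 : ‖y - y'‖ < ε / 2 := by rw [← dist_eq_norm]; exact hd
      have h6 : ‖y' - y‖ < ε / 2 := by rw [← dist_eq_norm, dist_comm, dist_eq_norm]; exact h5
      linarith
    have h0 : ‖Θ (Ξ y) - y‖ ≤ 0 := by
      have := le_of_forall_pos_le_add key
      simpa using this
    exact sub_eq_zero.1 (norm_le_zero_iff.1 h0)
  constructor
  · refine ⟨Θ, ?_, fun n x hx => hspec n x hx⟩
    rw [hgA, hgB]
    refine ⟨⟨fun x hx => hmaps hx, ?_, ?_⟩, hadd, hsmul, hmul, hstar⟩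
    · intro x hx y hy h
      rw [← hΞΘ x hx, ← hΞΘ y hy, h]
    · intro y hy
      exact ⟨Ξ y, hmapsΞ hy, hΘΞ y hy⟩
  · rintro Θ₁ Θ₂ ⟨hiso₁, hspec₁⟩ ⟨hiso₂, hspec₂⟩ x hx
    have hlip₁ := VNEnd.lip_of_iso ρ hiso₁
    have hlip₂ := VNEnd.lip_of_iso ρ hiso₂
    have hxg := hx
    rw [hgA] at hx
    have key : ∀ ε : ℝ, 0 < ε → ‖Θ₁ x - Θ₂ x‖ ≤ 0 + ε := by
      intro ε hε
      obtain ⟨x', hx'A, hd⟩ := Metric.mem_closure_iff.1 hx (ε/2) (by linarith)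
      obtain ⟨_, ⟨n, rfl⟩, hx'n⟩ := hx'A
      have hx'g : x' ∈ cstarGen (⋃ n, relComm M ρ.toFun n) := by
        rw [hgA]; exact subset_closure (Set.mem_iUnion.2 ⟨n, hx'n⟩)
      have e : Θ₁ x' = Θ₂ x' := by rw [hspec₁ n x' hx'n, hspec₂ n x' hx'n]
      have h1 : ‖Θ₁ x - Θ₁ x'‖ ≤ ‖x - x'‖ := hlip₁ x hxg x' hx'g
      have h2 : ‖Θ₂ x' - Θ₂ x‖ ≤ ‖x' - x‖ := hlip₂ x' hx'g x hxg
      have h3 : dist (Θ₁ x) (Θ₂ x) ≤ dist (Θ₁ x) (Θ₁ x') + dist (Θ₁ x') (Θ₂ x) :=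
        dist_triangle _ _ _
      rw [dist_eq_norm, dist_eq_norm, dist_eq_norm] at h3
      rw [← e] at h2
      have h5 : ‖x - x'‖ < ε / 2 := by rw [← dist_eq_norm]; exact hd
      have h6 : ‖x' - x‖ < ε / 2 := by rw [← dist_eq_norm, dist_comm, dist_eq_norm]; exact h5
      linarith
    have h0 : ‖Θ₁ x - Θ₂ x‖ ≤ 0 := by
      have := le_of_forall_pos_le_add key
      simpa using this
    exact sub_eq_zero.1 (norm_le_zero_iff.1 h0)
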